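/- Let (W,S) be a Coxeter system and ω a word in S. A subword α ⊆ ω is ω-sorted (i.e., its index set is lexicographically least among index sets of reduced subwords of ω representing the same group element ⟨α⟩) if and only if sort_ω(α) = α, where sort_ω is the ω-sorting algorithm applied to ⟨α⟩. -/

import Mathlib

namespace SortingPaper

variable {B : Type*} {M : CoxeterMatrix B} {W : Type*} [Group W]

/-- The subword of `ω` with index set `A` (0-based indices). -/
def subword (ω : List B) (A : Finset ℕ) : List B :=
  (A.sort (· ≤ ·)).filterMap (fun i => ω[i]?)

/-- Lexicographic comparison of index sets: `A ≤lex C` iff `A = C` or the minimum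
element of the symmetric difference belongs to `A`. -/
def lexLE (A C : Finset ℕ) : Prop :=
  A = C ∨ ∃ k, k ∈ A ∧ k ∉ C ∧ ∀ j < k, (j ∈ A ↔ j ∈ C)

/-- `A` is the index set of an ω-sorted word: the corresponding subword is reduced, and
`A` is lexicographically least among index sets of reduced subwords of `ω` with the
same product in `W`. -/
def IsSorted (cs : CoxeterSystem M W) (ω : List B) (A : Finset ℕ) : Prop :=
  A ⊆ Finset.range ω.length ∧ cs.IsReduced (subword ω A) ∧
  ∀ C ⊆ Finset.range ω.length, cs.IsReduced (subword ω C) →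
    cs.wordProd (subword ω C) = cs.wordProd (subword ω A) → lexLE A C

/-- The ω-sorting algorithm (auxiliary): scan the word, recording positions that are
left descents of the current element. -/
noncomputable def sortAux (cs : CoxeterSystem M W) : List B → ℕ → W → Finset ℕ
  | [], _, _ => ∅
  | s :: rest, i, x =>
    if cs.length (cs.simple s * x) < cs.length x then
      insert i (sortAux cs rest (i + 1) (cs.simple s * x))
    else sortAux cs rest (i + 1) x

/-- The index set produced by the ω-sorting algorithm applied to `u ∈ W`. -/
noncomputable def sortIdx (cs : CoxeterSystem M W) (ω : List B) (u : W) : Finset ℕ :=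
  sortAux cs ω 0 u

open CoxeterSystem List
open scoped Classical

section GenericGroup

variable {G : Type*} [Group G]

lemma conj1 {a q : G} (hq : q * a * q = a) : ∀ l : ℕ, q ^ l * a * q ^ l = a := by
  intro l
  induction l with
  | zero => simp
  | succ l ih =>
    have h : q ^ (l+1) * a * q ^ (l+1) = q * (q ^ l * a * q ^ l) * q := by
      group
    rw [h, ih, hq]

lemma conj2 {a q : G} (hq : q * a * q = a) (l : ℕ) :
    q ^ (2 * l) * a * q ^ l = q ^ l * a := by
  rw [two_mul, pow_add, mul_assoc (q ^ l) (q ^ l) a, mul_assoc, conj1 hq]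

lemma conj3 {a q : G} (hq : q * a * q = a) (l : ℕ) :
    q ^ (2 * l + 1) * a * q ^ l = q ^ l * (q * a) := by
  rw [pow_succ', mul_assoc q, mul_assoc q, conj2 hq, ← mul_assoc, ← pow_succ', pow_succ]
  group

lemma conj_eq_iff (c t x : G) : c⁻¹ * t * c = x ↔ t = c * x * c⁻¹ := by
  constructor
  · intro h; rw [← h]; group
  · intro h; rw [h]; group

lemma conj_pow_eq_iff_even {a q : G} (hq : q * a * q = a) (l : ℕ) (t : G) :
    ((q ^ l)⁻¹ * t * q ^ l = a) ↔ (t = q ^ (2 * l) * a) := by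
  rw [conj_eq_iff]
  have : q ^ l * a * (q ^ l)⁻¹ = q ^ (2 * l) * a := by
    rw [mul_inv_eq_iff_eq_mul, conj2 hq]
  rw [this]

lemma conj_pow_eq_iff_odd {a q : G} (hq : q * a * q = a) (l : ℕ) (t : G) :
    ((q ^ l)⁻¹ * t * q ^ l = q * a) ↔ (t = q ^ (2 * l + 1) * a) := by
  rw [conj_eq_iff]
  have : q ^ l * (q * a) * (q ^ l)⁻¹ = q ^ (2 * l + 1) * a := by
    rw [mul_inv_eq_iff_eq_mul, conj3 hq]
  rw [this]

lemma sum_double_range (f : ℕ → ZMod 2) (m : ℕ) :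
    ∑ l ∈ Finset.range m, (f (2 * l) + f (2 * l + 1)) = ∑ a ∈ Finset.range (2 * m), f a := by
  induction m with
  | zero => simp
  | succ m ih =>
    rw [Finset.sum_range_succ, ih, mul_add, mul_one, show 2*m+2 = (2*m+1)+1 by ring,
      Finset.sum_range_succ, Finset.sum_range_succ, add_assoc]

lemma sum_indicator_pow_eq_zero {q : G} {m : ℕ} (hq : q ^ m = 1) (t c : G) :
    ∑ a ∈ Finset.range (2 * m), (if t = q ^ a * c then (1 : ZMod 2) else 0) = 0 := by
  rw [two_mul, Finset.sum_range_add]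
  have h : ∀ a, (if t = q ^ (m + a) * c then (1 : ZMod 2) else 0)
      = (if t = q ^ a * c then (1 : ZMod 2) else 0) := by
    intro a; rw [pow_add, hq, one_mul]
  simp only [h]
  exact CharTwo.add_self_eq_zero _

end GenericGroup

section Exchange

open scoped Classical

variable (cs : CoxeterSystem M W)

local prefix:100 "s" => cs.simple
local prefix:100 "π" => cs.wordProd
local prefix:100 "ℓ" => cs.length

lemma simple_conj_eq_simple_iff (i : B) (t : W) :
    s i * t * s i = s i ↔ t = s i := by
  have hs : s i * s i = 1 := cs.simple_mul_simple_self i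
  constructor
  · intro h
    have h2 : s i * t * s i = (s i * s i) * s i := by rw [hs, one_mul]; exact h
    exact mul_left_cancel (mul_right_cancel h2)
  · rintro rfl
    rw [hs, one_mul]

/-- The reflection-counting involution used to prove the exchange property. -/
noncomputable def eta (i : B) : Equiv.Perm (W × ZMod 2) :=
  Function.Involutive.toPerm
    (fun p => (s i * p.1 * s i, p.2 + if p.1 = s i then 1 else 0))
    (by
      intro p
      obtain ⟨t, ε⟩ := p
      have hs : s i * s i = 1 := cs.simple_mul_simple_self i
      simp only [Prod.mk.injEq]
      constructor
      · rw [← mul_assoc, ← mul_assoc, hs, one_mul, mul_assoc, hs, mul_one]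
      · rw [simple_conj_eq_simple_iff]
        rcases eq_or_ne t (s i) with rfl | hne
        · simp [add_assoc, CharTwo.add_self_eq_zero]
        · simp [hne])

lemma eta_apply (i : B) (t : W) (ε : ZMod 2) :
    eta cs i (t, ε) = (s i * t * s i, ε + if t = s i then 1 else 0) := rfl

lemma simple_conj_conj (j : B) (t : W) : s j * (s j * t * s j) * s j = t := by
  have hs : s j * s j = 1 := cs.simple_mul_simple_self j
  rw [← mul_assoc, ← mul_assoc, hs, one_mul, mul_assoc, hs, mul_one]

lemma simple_conj_eq_iff (j : B) (t x : W) : s j * t * s j = x ↔ t = s j * x * s j := by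
  constructor
  · intro h; rw [← h, simple_conj_conj]
  · intro h; rw [h, simple_conj_conj]

/-- The per-step epsilon increment of `eta i ∘ eta j`. -/
noncomputable def chi (i j : B) (t : W) : ZMod 2 :=
  (if t = s j then 1 else 0) + (if t = (s j * s i) * s j then 1 else 0)

lemma eta_mul_apply (i j : B) (t : W) (ε : ZMod 2) :
    (eta cs i * eta cs j) (t, ε)
      = (((s j * s i))⁻¹ * t * (s j * s i), ε + chi cs i j t) := by
  rw [Equiv.Perm.mul_apply, eta_apply, eta_apply]
  have h1 : s i * (s j * t * s j) * s i = (s j * s i)⁻¹ * t * (s j * s i) := by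
    rw [mul_inv_rev, cs.inv_simple, cs.inv_simple]; group
  have h2 : (s j * t * s j = s i) ↔ (t = (s j * s i) * s j) := by
    rw [simple_conj_eq_iff]
  rw [h1, Prod.mk.injEq]
  refine ⟨rfl, ?_⟩
  simp only [h2]
  rw [chi, add_assoc]

lemma eta_mul_pow_apply (i j : B) (k : ℕ) (t : W) (ε : ZMod 2) :
    ((eta cs i * eta cs j) ^ k) (t, ε)
      = (((s j * s i) ^ k)⁻¹ * t * (s j * s i) ^ k,
          ε + ∑ l ∈ Finset.range k, chi cs i j (((s j * s i) ^ l)⁻¹ * t * (s j * s i) ^ l)) := by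
  set q : W := s j * s i with hqd
  induction k generalizing t ε with
  | zero => simp
  | succ k ih =>
    rw [pow_succ, Equiv.Perm.mul_apply, eta_mul_apply, ih, Prod.mk.injEq]
    have hc : ∀ l : ℕ, (q ^ l)⁻¹ * (q⁻¹ * t * q) * q ^ l
        = (q ^ (l+1))⁻¹ * t * q ^ (l+1) := by
      intro l; group
    constructor
    · exact hc k
    · simp only [← hqd, hc]
      rw [Finset.sum_range_succ' (fun l => chi cs i j
        ((q ^ l)⁻¹ * t * q ^ l)) k]
      simp only [pow_zero, inv_one, one_mul, mul_one]
      rw [add_comm (∑ _l ∈ Finset.range k, _) (chi cs i j t), add_assoc]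

lemma eta_liftable : M.IsLiftable (fun i => eta cs i) := by
  intro i j
  apply Equiv.ext
  rintro ⟨t, ε⟩
  set a := s j with ha_def
  set q : W := s j * s i with hq_def
  have hq : q ^ M i j = 1 := cs.simple_mul_simple_pow' i j
  have hqa : q * a * q = a := by
    have hsi : s i * s i = 1 := cs.simple_mul_simple_self i
    have hsj : s j * s j = 1 := cs.simple_mul_simple_self j
    calc q * a * q = s j * (s i * (s j * s j) * s i) := by rw [hq_def, ha_def]; group
      _ = a := by rw [hsj, mul_one, hsi, mul_one]
  rw [Equiv.Perm.one_apply, eta_mul_pow_apply, hq]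
  simp only [inv_one, one_mul, mul_one]
  refine Prod.ext rfl ?_
  show ε + ∑ l ∈ Finset.range (M i j), chi cs i j ((q ^ l)⁻¹ * t * q ^ l) = ε
  have hterm : ∀ l, chi cs i j ((q ^ l)⁻¹ * t * q ^ l)
      = (if t = q ^ (2 * l) * a then (1 : ZMod 2) else 0)
        + (if t = q ^ (2 * l + 1) * a then (1 : ZMod 2) else 0) := by
    intro l
    rw [chi]
    congr 1
    · exact if_congr (conj_pow_eq_iff_even hqa l t) rfl rfl
    · exact if_congr ((conj_pow_eq_iff_odd hqa l t).trans Iff.rfl) rfl rfl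
  simp only [hterm]
  rw [sum_double_range (fun x => if t = q ^ x * a then (1 : ZMod 2) else 0) (M i j),
    sum_indicator_pow_eq_zero hq, add_zero]

/-- The parity homomorphism used to prove the exchange property. -/
noncomputable def phi : W →* Equiv.Perm (W × ZMod 2) :=
  cs.lift ⟨fun i => eta cs i, eta_liftable cs⟩

lemma phi_simple (i : B) : phi cs (s i) = eta cs i :=
  cs.lift_apply_simple (eta_liftable cs) i

end Exchange

section Cnt

/-- A bespoke (classical) count of occurrences in a list. -/
noncomputable def cnt {α : Type*} (t : α) : List α → ℕ
  | [] => 0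
  | x :: l => cnt t l + if x = t then 1 else 0

lemma cnt_nil {α : Type*} (t : α) : cnt t ([] : List α) = 0 := rfl

lemma cnt_cons {α : Type*} (t x : α) (l : List α) :
    cnt t (x :: l) = cnt t l + if x = t then 1 else 0 := rfl

lemma cnt_eq_zero_iff {α : Type*} (t : α) (l : List α) : cnt t l = 0 ↔ t ∉ l := by
  induction l with
  | nil => simp [cnt_nil]
  | cons x l ih =>
    rw [cnt_cons]
    rcases eq_or_ne x t with rfl | hne
    · simp
    · simp [hne, Ne.symm hne, ih]

lemma cnt_le_one_of_nodup {α : Type*} {t : α} {l : List α} (h : l.Nodup) : cnt t l ≤ 1 := by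
  induction l with
  | nil => simp [cnt_nil]
  | cons x l ih =>
    rw [List.nodup_cons] at h
    rw [cnt_cons]
    rcases eq_or_ne x t with rfl | hne
    · have : cnt x l = 0 := (cnt_eq_zero_iff x l).mpr h.1
      simp [this]
    · simp [hne, ih h.2]

lemma mem_iff_cnt_eq_one_of_nodup {α : Type*} {t : α} {l : List α} (h : l.Nodup) :
    t ∈ l ↔ cnt t l = 1 := by
  have h1 := cnt_le_one_of_nodup (t := t) h
  have h2 := cnt_eq_zero_iff t l
  constructor
  · intro hm
    have : cnt t l ≠ 0 := fun hc => (h2.mp hc) hm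
    omega
  · intro hc
    by_contra hm
    rw [← h2] at hm
    omega

end Cnt

section Exchange3

open scoped Classical

variable (cs : CoxeterSystem M W)

local prefix:100 "s" => cs.simple
local prefix:100 "π" => cs.wordProd
local prefix:100 "ℓ" => cs.length

lemma rightInvSeq_cons' (i : B) (ω : List B) :
    cs.rightInvSeq (i :: ω) = ((π ω)⁻¹ * s i * π ω) :: cs.rightInvSeq ω := rfl

lemma phi_wordProd (ω : List B) (t : W) (ε : ZMod 2) :
    phi cs (π ω) (t, ε)
      = (π ω * t * (π ω)⁻¹, ε + ((cnt t (cs.rightInvSeq ω) : ℕ) : ZMod 2)) := by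
  induction ω generalizing t ε with
  | nil => simp [cnt_nil]
  | cons i ω ih =>
    rw [wordProd_cons, map_mul, Equiv.Perm.mul_apply, ih, phi_simple, eta_apply,
      rightInvSeq_cons', cnt_cons]
    have h1 : s i * (π ω * t * (π ω)⁻¹) * s i = (s i * π ω) * t * (s i * π ω)⁻¹ := by
      rw [mul_inv_rev, cs.inv_simple]; group
    have h2 : (π ω * t * (π ω)⁻¹ = s i) ↔ ((π ω)⁻¹ * s i * π ω = t) := by
      constructor
      · intro h; rw [← h]; group
      · intro h; rw [← h]; group
    rw [h1, Prod.mk.injEq]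
    refine ⟨rfl, ?_⟩
    simp only [h2]
    rw [Nat.cast_add, ← add_assoc]
    congr 1
    rcases eq_or_ne ((π ω)⁻¹ * s i * π ω) t with he | hne
    · simp [he]
    · simp [hne]

lemma mem_rightInvSeq_iff_of_reduced {ω ω' : List B} (hω : cs.IsReduced ω)
    (hω' : cs.IsReduced ω') (h : π ω = π ω') (t : W) :
    t ∈ cs.rightInvSeq ω ↔ t ∈ cs.rightInvSeq ω' := by
  have hphi := phi_wordProd cs ω t 0
  rw [h, phi_wordProd cs ω' t 0] at hphi
  have hsnd : ((cnt t (cs.rightInvSeq ω') : ℕ) : ZMod 2)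
      = ((cnt t (cs.rightInvSeq ω) : ℕ) : ZMod 2) := by
    have := congrArg Prod.snd hphi
    simpa using this
  have h1 : cnt t (cs.rightInvSeq ω) ≤ 1 := cnt_le_one_of_nodup (hω.nodup_rightInvSeq)
  have h2 : cnt t (cs.rightInvSeq ω') ≤ 1 := cnt_le_one_of_nodup (hω'.nodup_rightInvSeq)
  rw [mem_iff_cnt_eq_one_of_nodup hω.nodup_rightInvSeq,
    mem_iff_cnt_eq_one_of_nodup hω'.nodup_rightInvSeq]
  interval_cases h3 : cnt t (cs.rightInvSeq ω) <;> interval_cases h4 : cnt t (cs.rightInvSeq ω')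
    <;> simp_all

/-- The (right) exchange property. -/
lemma exchange_right {ω : List B} (hω : cs.IsReduced ω) {i : B}
    (h : ℓ (π ω * s i) < ℓ (π ω)) :
    ∃ j < ω.length, π (ω.eraseIdx j) = π ω * s i := by
  obtain ⟨ω₂, hlen, heq⟩ := cs.exists_reduced_word (π ω * s i)
  have hlen' : ℓ (π ω * s i) + 1 = ℓ (π ω) := by
    rcases cs.length_mul_simple (π ω) i with h' | h'
    · omega
    · exact h'
  have hprod : π (ω₂ ++ [i]) = π ω := by
    rw [wordProd_append, ← heq]
    simp [wordProd_cons, mul_assoc]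
  have hred : cs.IsReduced (ω₂ ++ [i]) := by
    rw [CoxeterSystem.IsReduced, hprod, List.length_append, List.length_singleton]
    have hl : ℓ (π ω₂) = ω₂.length := hlen
    rw [← heq] at hl
    omega
  have hmem : s i ∈ cs.rightInvSeq (ω₂ ++ [i]) := by
    have := cs.rightInvSeq_concat ω₂ i
    rw [List.concat_eq_append] at this
    rw [this]
    simp
  have hmem' : s i ∈ cs.rightInvSeq ω :=
    (mem_rightInvSeq_iff_of_reduced cs hred hω hprod (s i)).mp hmem
  obtain ⟨j, hj, hje⟩ := List.mem_iff_getElem.mp hmem'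
  rw [cs.length_rightInvSeq] at hj
  refine ⟨j, hj, ?_⟩
  have := cs.wordProd_mul_getD_rightInvSeq ω j
  rw [List.getD_eq_getElem _ _ (by rw [cs.length_rightInvSeq]; exact hj), hje] at this
  rw [← this]

/-- The (left) exchange property, sublist version. -/
lemma exchange_left {β : List B} (hβ : cs.IsReduced β) {i : B}
    (h : ℓ (s i * π β) < ℓ (π β)) :
    ∃ γ, γ.Sublist β ∧ cs.IsReduced γ ∧ π γ = s i * π β := by
  have hrev : cs.IsReduced β.reverse := (cs.isReduced_reverse_iff β).mpr hβ
  have hlen : ℓ (π β.reverse * s i) < ℓ (π β.reverse) := by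
    rw [cs.wordProd_reverse]
    have : (π β)⁻¹ * s i = (s i * π β)⁻¹ := by rw [mul_inv_rev, cs.inv_simple]
    rw [this, cs.length_inv, cs.length_inv]
    exact h
  obtain ⟨j, hj, hje⟩ := exchange_right cs hrev hlen
  refine ⟨(β.reverse.eraseIdx j).reverse, ?_, ?_, ?_⟩
  · have h1 : β.reverse.eraseIdx j <+ β.reverse := List.eraseIdx_sublist _ _
    have h2 := h1.reverse
    rwa [List.reverse_reverse] at h2
  · rw [CoxeterSystem.IsReduced, cs.wordProd_reverse, hje, cs.wordProd_reverse]
    have e1 : ((π β)⁻¹ * s i)⁻¹ = s i * π β := by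
      rw [mul_inv_rev, cs.inv_simple, inv_inv]
    rw [e1, List.length_reverse, List.length_eraseIdx]
    rw [List.length_reverse] at hj ⊢
    simp only [hj, if_pos]
    have hd : ℓ (s i * π β) + 1 = ℓ (π β) := by
      rcases cs.length_simple_mul (π β) i with h' | h'
      · omega
      · exact h'
    have : ℓ (π β) = β.length := hβ
    omega
  · rw [cs.wordProd_reverse, hje, cs.wordProd_reverse, mul_inv_rev, cs.inv_simple, inv_inv]

/-- Every word has a reduced sublist with the same product. -/
lemma exists_reduced_sublist (w : List B) :
    ∃ β, β.Sublist w ∧ cs.IsReduced β ∧ π β = π w := by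
  induction w with
  | nil => exact ⟨[], List.Sublist.refl _, by simp [CoxeterSystem.IsReduced], rfl⟩
  | cons i w ih =>
    obtain ⟨β, hsub, hred, hprod⟩ := ih
    by_cases h : ℓ (s i * π β) < ℓ (π β)
    · obtain ⟨γ, hγsub, hγred, hγprod⟩ := exchange_left cs hred h
      refine ⟨γ, (hγsub.trans hsub).trans (List.sublist_cons_self i w), hγred, ?_⟩
      rw [hγprod, hprod, wordProd_cons]
    · have hd : ℓ (s i * π β) = ℓ (π β) + 1 := by
        rcases cs.length_simple_mul (π β) i with h' | h'
        · exact h'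
        · omega
      refine ⟨i :: β, hsub.cons₂ i, ?_, ?_⟩
      · rw [CoxeterSystem.IsReduced, wordProd_cons, hd, List.length_cons, hred]
      · rw [wordProd_cons, wordProd_cons, hprod]

end Exchange3

section Subword

/-- Shift an index set down by one, forgetting index `0`. -/
def shift (A : Finset ℕ) : Finset ℕ := (A.erase 0).image (· - 1)

lemma mem_shift {A : Finset ℕ} {m : ℕ} : m ∈ shift A ↔ m + 1 ∈ A := by
  unfold shift
  simp only [Finset.mem_image, Finset.mem_erase]
  constructor
  · rintro ⟨a, ⟨h0, ha⟩, hm⟩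
    have : a = m + 1 := by omega
    rwa [← this]
  · intro h
    exact ⟨m + 1, ⟨by omega, h⟩, rfl⟩

lemma mem_image_add_one {X : Finset ℕ} {j : ℕ} :
    j ∈ X.image (· + 1) ↔ j ≠ 0 ∧ j - 1 ∈ X := by
  simp only [Finset.mem_image]
  constructor
  · rintro ⟨m, hm, rfl⟩; exact ⟨by omega, by simpa using hm⟩
  · rintro ⟨h0, h1⟩; exact ⟨j - 1, h1, by omega⟩

lemma zero_not_mem_image_add_one (X : Finset ℕ) : 0 ∉ X.image (· + 1) := by
  rw [mem_image_add_one]; simp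

lemma shift_subset_range {A : Finset ℕ} {n : ℕ} (h : A ⊆ Finset.range (n + 1)) :
    shift A ⊆ Finset.range n := by
  intro m hm
  rw [mem_shift] at hm
  have := h hm
  rw [Finset.mem_range] at this ⊢
  omega

lemma eq_insert_shift {A : Finset ℕ} (h : 0 ∈ A) :
    A = insert 0 ((shift A).image (· + 1)) := by
  ext j
  rcases Nat.eq_zero_or_pos j with rfl | hj
  · simp [h]
  · rw [Finset.mem_insert, mem_image_add_one, mem_shift]
    constructor
    · intro hjA
      right
      refine ⟨by omega, ?_⟩
      have : j - 1 + 1 = j := by omega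
      rwa [this]
    · rintro (rfl | ⟨h0, h1⟩)
      · omega
      · have : j - 1 + 1 = j := by omega
        rwa [this] at h1

lemma eq_image_shift {A : Finset ℕ} (h : 0 ∉ A) :
    A = (shift A).image (· + 1) := by
  ext j
  rw [mem_image_add_one, mem_shift]
  constructor
  · intro hjA
    have hj0 : j ≠ 0 := by rintro rfl; exact h hjA
    refine ⟨hj0, ?_⟩
    have : j - 1 + 1 = j := by omega
    rwa [this]
  · rintro ⟨h0, h1⟩
    have : j - 1 + 1 = j := by omega
    rwa [this] at h1

lemma shift_insert_image (X : Finset ℕ) : shift (insert 0 (X.image (· + 1))) = X := by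
  ext m
  rw [mem_shift, Finset.mem_insert, mem_image_add_one]
  constructor
  · rintro (h | ⟨_, h⟩)
    · omega
    · simpa using h
  · intro h; right; exact ⟨by omega, by simpa using h⟩

lemma shift_image (X : Finset ℕ) : shift (X.image (· + 1)) = X := by
  ext m
  rw [mem_shift, mem_image_add_one]
  constructor
  · rintro ⟨_, h⟩; simpa using h
  · intro h; exact ⟨by omega, by simpa using h⟩

lemma sort_image_add_one (X : Finset ℕ) :
    (X.image (· + 1)).sort (· ≤ ·) = (X.sort (· ≤ ·)).map (· + 1) := by
  refine List.Perm.eq_of_pairwise' (Finset.pairwise_sort _ _)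
    (List.Pairwise.map _ (fun a b hab => by omega) (Finset.pairwise_sort X (· ≤ ·))) ?_
  apply List.perm_of_nodup_nodup_toFinset_eq
  · exact Finset.sort_nodup _ _
  · exact (Finset.sort_nodup _ _).map (fun a b hab => by omega)
  · ext x
    simp [List.mem_toFinset, Finset.mem_sort]

lemma subword_nil (A : Finset ℕ) : subword ([] : List B) A = [] := by
  unfold subword
  simp

lemma subword_cons (a : B) (rest : List B) (A : Finset ℕ) :
    subword (a :: rest) A
      = (if 0 ∈ A then [a] else []) ++ subword rest (shift A) := by
  by_cases h0 : 0 ∈ A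
  · rw [if_pos h0]
    conv_lhs => rw [eq_insert_shift h0]
    unfold subword
    rw [Finset.sort_insert (· ≤ ·) (fun b _ => Nat.zero_le b) (zero_not_mem_image_add_one _),
      List.filterMap_cons, sort_image_add_one]
    simp only [List.getElem?_cons_zero, Option.isSome_some]
    rw [List.filterMap_map]
    congr 1
  · rw [if_neg h0]
    conv_lhs => rw [eq_image_shift h0]
    unfold subword
    rw [sort_image_add_one, List.filterMap_map]
    simp only [List.nil_append]
    congr 1

lemma subword_sublist (ω : List B) (A : Finset ℕ) : (subword ω A).Sublist ω := by
  induction ω generalizing A with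
  | nil => rw [subword_nil]
  | cons a rest ih =>
    rw [subword_cons]
    by_cases h0 : 0 ∈ A
    · rw [if_pos h0]
      exact (ih (shift A)).cons₂ a
    · rw [if_neg h0]
      simpa using (ih (shift A)).cons a

end Subword

section LexLE

lemma lexLE_refl (A : Finset ℕ) : lexLE A A := Or.inl rfl

lemma lexLE_antisymm {A C : Finset ℕ} (h1 : lexLE A C) (h2 : lexLE C A) : A = C := by
  rcases h1 with rfl | ⟨k, hkA, hkC, hk⟩
  · rfl
  rcases h2 with rfl | ⟨k', hk'C, hk'A, hk'⟩
  · rfl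
  rcases lt_trichotomy k k' with h | rfl | h
  · exact absurd ((hk' k h).mpr hkA) hkC
  · exact absurd hk'C hkC
  · exact absurd ((hk k' h).mpr hk'C) hk'A

lemma lexLE_image {X Y : Finset ℕ} (h : lexLE X Y) :
    lexLE (X.image (· + 1)) (Y.image (· + 1)) := by
  rcases h with rfl | ⟨k, hkX, hkY, hk⟩
  · exact lexLE_refl _
  · right
    refine ⟨k + 1, mem_image_add_one.mpr ⟨by omega, by simpa using hkX⟩, ?_, ?_⟩
    · rw [mem_image_add_one]
      rintro ⟨_, h1⟩
      exact hkY (by simpa using h1)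
    · intro j hj
      rw [mem_image_add_one, mem_image_add_one]
      rcases Nat.eq_zero_or_pos j with rfl | hj0
      · simp
      · have hlt : j - 1 < k := by omega
        have := hk (j - 1) hlt
        tauto

lemma lexLE_insert {X Y : Finset ℕ} (h : lexLE X Y) :
    lexLE (insert 0 (X.image (· + 1))) (insert 0 (Y.image (· + 1))) := by
  rcases h with rfl | ⟨k, hkX, hkY, hk⟩
  · exact lexLE_refl _
  · right
    refine ⟨k + 1, ?_, ?_, ?_⟩
    · exact Finset.mem_insert_of_mem (mem_image_add_one.mpr ⟨by omega, by simpa using hkX⟩)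
    · rw [Finset.mem_insert, mem_image_add_one]
      rintro (h1 | ⟨_, h1⟩)
      · omega
      · exact hkY (by simpa using h1)
    · intro j hj
      rw [Finset.mem_insert, Finset.mem_insert, mem_image_add_one, mem_image_add_one]
      rcases Nat.eq_zero_or_pos j with rfl | hj0
      · simp
      · have hlt : j - 1 < k := by omega
        have := hk (j - 1) hlt
        have hj0' : ¬ (j = 0) := by omega
        tauto

end LexLE


section Sorting

variable (cs : CoxeterSystem M W)

local prefix:100 "s" => cs.simple
local prefix:100 "π" => cs.wordProd
local prefix:100 "ℓ" => cs.length

lemma sortAux_succ (ω : List B) : ∀ (i : ℕ) (x : W),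
    sortAux cs ω (i + 1) x = (sortAux cs ω i x).image (· + 1) := by
  induction ω with
  | nil => intro i x; simp [sortAux]
  | cons a rest ih =>
    intro i x
    rw [sortAux, sortAux]
    by_cases h : ℓ (s a * x) < ℓ x
    · rw [if_pos h, if_pos h, ih (i + 1), Finset.image_insert]
    · rw [if_neg h, if_neg h, ih (i + 1)]

lemma sortIdx_nil (u : W) : sortIdx cs [] u = ∅ := rfl

lemma sortIdx_cons (a : B) (rest : List B) (u : W) :
    sortIdx cs (a :: rest) u
      = if ℓ (s a * u) < ℓ u then
          insert 0 ((sortIdx cs rest (s a * u)).image (· + 1))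
        else (sortIdx cs rest u).image (· + 1) := by
  rw [sortIdx, sortAux]
  by_cases h : ℓ (s a * u) < ℓ u
  · rw [if_pos h, if_pos h, sortAux_succ, sortIdx]
  · rw [if_neg h, if_neg h, sortAux_succ, sortIdx]

lemma sort_spec : ∀ (ω : List B) (u : W),
    (∃ β, β.Sublist ω ∧ cs.IsReduced β ∧ π β = u) →
    sortIdx cs ω u ⊆ Finset.range ω.length ∧
    cs.IsReduced (subword ω (sortIdx cs ω u)) ∧
    π (subword ω (sortIdx cs ω u)) = u ∧
    ∀ D ⊆ Finset.range ω.length, cs.IsReduced (subword ω D) →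
      π (subword ω D) = u → lexLE (sortIdx cs ω u) D := by
  intro ω
  induction ω with
  | nil =>
    rintro u ⟨β, hsub, _, hprod⟩
    have hβ : β = [] := List.sublist_nil.mp hsub
    subst hβ
    rw [wordProd_nil] at hprod
    subst hprod
    rw [sortIdx_nil, subword_nil]
    refine ⟨Finset.empty_subset _, by simp [CoxeterSystem.IsReduced], by simp, ?_⟩
    intro D hD _ _
    have : D = ∅ := by
      rw [List.length_nil, Finset.range_zero, Finset.subset_empty] at hD
      exact hD
    rw [this]
    exact lexLE_refl _
  | cons a rest ih =>
    rintro u ⟨β, hsub, hred, hprod⟩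
    by_cases hdesc : ℓ (s a * u) < ℓ u
    · -- descent case
      have hu1 : ℓ (s a * u) + 1 = ℓ u := by
        rcases cs.length_simple_mul u a with h' | h'
        · omega
        · exact h'
      have hwit : ∃ γ, γ.Sublist rest ∧ cs.IsReduced γ ∧ π γ = s a * u := by
        cases hsub with
        | cons _ h =>
          have h' : ℓ (s a * π β) < ℓ (π β) := by rw [hprod]; exact hdesc
          obtain ⟨γ, hγsub, hγred, hγprod⟩ := exchange_left cs hred h'
          exact ⟨γ, hγsub.trans h, hγred, by rw [hγprod, hprod]⟩
        | cons_cons _ h =>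
          rename_i β'
          have hp : π β' = s a * u := by
            rw [← hprod, wordProd_cons, simple_mul_simple_cancel_left]
          have h1 : ℓ u = β'.length + 1 := by
            have h1' : ℓ (π (a :: β')) = (a :: β').length := hred
            rw [hprod, List.length_cons] at h1'
            exact h1'
          have hlen : ℓ (π β') = β'.length := by
            rw [hp]; omega
          exact ⟨β', h, hlen, hp⟩
      obtain ⟨hG1, hG2, hG3, hG4⟩ := ih (s a * u) hwit
      have hidx : sortIdx cs (a :: rest) u
          = insert 0 ((sortIdx cs rest (s a * u)).image (· + 1)) := by
        rw [sortIdx_cons, if_pos hdesc]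
      set G₁ := sortIdx cs rest (s a * u) with hG₁def
      have h0G : (0 : ℕ) ∈ sortIdx cs (a :: rest) u := by
        rw [hidx]; exact Finset.mem_insert_self _ _
      have hshiftG : shift (sortIdx cs (a :: rest) u) = G₁ := by
        rw [hidx, shift_insert_image]
      have hsubw : subword (a :: rest) (sortIdx cs (a :: rest) u)
          = a :: subword rest G₁ := by
        rw [subword_cons, if_pos h0G, hshiftG, List.singleton_append]
      have hprodG : π (subword (a :: rest) (sortIdx cs (a :: rest) u)) = u := by
        rw [hsubw, wordProd_cons, hG3, simple_mul_simple_cancel_left]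
      refine ⟨?_, ?_, hprodG, ?_⟩
      · rw [hidx]
        intro x hx
        rcases Finset.mem_insert.mp hx with rfl | hx'
        · simp
        · rw [mem_image_add_one] at hx'
          have := hG1 hx'.2
          rw [Finset.mem_range] at this ⊢
          rw [List.length_cons]
          omega
      · rw [CoxeterSystem.IsReduced, hprodG, hsubw, List.length_cons]
        have : (subword rest G₁).length = ℓ (s a * u) := by
          rw [← hG2, hG3]
        omega
      · intro D hD hDred hDprod
        by_cases h0 : 0 ∈ D
        · have hsubD : subword (a :: rest) D = a :: subword rest (shift D) := by
            rw [subword_cons, if_pos h0, List.singleton_append]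
          have hDtailred : cs.IsReduced (subword rest (shift D)) := by
            have := CoxeterSystem.IsReduced.drop (ω := subword (a :: rest) D) hDred 1
            rwa [hsubD, List.drop_succ_cons, List.drop_zero] at this
          have hDtailprod : π (subword rest (shift D)) = s a * u := by
            rw [hsubD, wordProd_cons] at hDprod
            rw [← hDprod, simple_mul_simple_cancel_left]
          have hDsub : shift D ⊆ Finset.range rest.length := by
            apply shift_subset_range
            rwa [List.length_cons] at hD
          have hlex := hG4 (shift D) hDsub hDtailred hDtailprod
          rw [hidx, eq_insert_shift h0]
          exact lexLE_insert hlex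
        · right
          exact ⟨0, h0G, h0, fun j hj => absurd hj (Nat.not_lt_zero j)⟩
    · -- non-descent case
      have hwit : ∃ γ, γ.Sublist rest ∧ cs.IsReduced γ ∧ π γ = u := by
        cases hsub with
        | cons _ h => exact ⟨β, h, hred, hprod⟩
        | cons_cons _ h =>
          rename_i β'
          exfalso
          have hp : π β' = s a * u := by
            rw [← hprod, wordProd_cons, simple_mul_simple_cancel_left]
          have h1 : ℓ u = β'.length + 1 := by
            have h1' : ℓ (π (a :: β')) = (a :: β').length := hred
            rw [hprod, List.length_cons] at h1'
            exact h1'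
          have h2 : ℓ (s a * u) ≤ β'.length := by
            rw [← hp]; exact cs.length_wordProd_le β'
          omega
      obtain ⟨hG1, hG2, hG3, hG4⟩ := ih u hwit
      have hidx : sortIdx cs (a :: rest) u = (sortIdx cs rest u).image (· + 1) := by
        rw [sortIdx_cons, if_neg hdesc]
      set G₁ := sortIdx cs rest u with hG₁def
      have h0G : (0 : ℕ) ∉ sortIdx cs (a :: rest) u := by
        rw [hidx]; exact zero_not_mem_image_add_one _
      have hshiftG : shift (sortIdx cs (a :: rest) u) = G₁ := by
        rw [hidx, shift_image]
      have hsubw : subword (a :: rest) (sortIdx cs (a :: rest) u) = subword rest G₁ := by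
        rw [subword_cons, if_neg h0G, hshiftG, List.nil_append]
      refine ⟨?_, ?_, ?_, ?_⟩
      · rw [hidx]
        intro x hx
        rw [mem_image_add_one] at hx
        have := hG1 hx.2
        rw [Finset.mem_range] at this ⊢
        rw [List.length_cons]
        omega
      · rw [hsubw]; exact hG2
      · rw [hsubw]; exact hG3
      · intro D hD hDred hDprod
        by_cases h0 : 0 ∈ D
        · exfalso
          have hsubD : subword (a :: rest) D = a :: subword rest (shift D) := by
            rw [subword_cons, if_pos h0, List.singleton_append]
          have hDtailprod : π (subword rest (shift D)) = s a * u := by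
            rw [hsubD, wordProd_cons] at hDprod
            rw [← hDprod, simple_mul_simple_cancel_left]
          have h2 : ℓ (s a * u) ≤ (subword rest (shift D)).length := by
            rw [← hDtailprod]; exact cs.length_wordProd_le _
          have h1 : ℓ u = (subword rest (shift D)).length + 1 := by
            have h1' : ℓ (π (subword (a :: rest) D)) = (subword (a :: rest) D).length := hDred
            rw [hDprod, hsubD, List.length_cons] at h1'
            exact h1'
          omega
        · have hsubD : subword (a :: rest) D = subword rest (shift D) := by
            rw [subword_cons, if_neg h0, List.nil_append]
          have hDsub : shift D ⊆ Finset.range rest.length := by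
            apply shift_subset_range
            rwa [List.length_cons] at hD
          have hlex := hG4 (shift D) hDsub (by rwa [hsubD] at hDred)
            (by rwa [hsubD] at hDprod)
          rw [hidx, eq_image_shift h0]
          exact lexLE_image hlex

end Sorting


/-- a subword `α ⊆ ω` is ω-sorted iff `sort_ω(α) = α`. -/
theorem isSorted_iff_sortIdx_eq (cs : CoxeterSystem M W) (ω : List B)
    (A : Finset ℕ) (hA : A ⊆ Finset.range ω.length) :
    IsSorted cs ω A ↔ sortIdx cs ω (cs.wordProd (subword ω A)) = A := by
  constructor
  · rintro ⟨hA1, hA2, hA3⟩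
    obtain ⟨hG1, hG2, hG3, hG4⟩ := sort_spec cs ω (cs.wordProd (subword ω A))
      ⟨subword ω A, subword_sublist ω A, hA2, rfl⟩
    have lex1 := hG4 A hA hA2 rfl
    have lex2 := hA3 _ hG1 hG2 hG3
    exact lexLE_antisymm lex1 lex2
  · intro hEq
    obtain ⟨β, hβsub, hβred, hβprod⟩ := exists_reduced_sublist cs (subword ω A)
    obtain ⟨hG1, hG2, hG3, hG4⟩ := sort_spec cs ω (cs.wordProd (subword ω A))
      ⟨β, hβsub.trans (subword_sublist ω A), hβred, hβprod⟩
    rw [hEq] at hG1 hG2 hG3 hG4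
    exact ⟨hA, hG2, fun C hC hCred hCprod => hG4 C hC hCred hCprod⟩

end SortingPaper
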